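/- Let p be a prime with p ≡ 1 (mod 4) and set f = (p-1)/4. Then (-4)^f · Σ_{k=0}^{p-1} C(2k,k)² · 32^(p-1-k) ≡ C(2f,f) · 32^(p-1) (mod p²). Equivalently, Σ_{k=0}^{p-1} C(2k,k)² / 32^k ≡ (-4)^(-f) · C(2f,f) (mod p²). -/

import Mathlib

open Finset Nat

namespace RV32


def Pg (a : ℤ) (m : ℕ) : ℤ := ∏ i ∈ range m, (a + 4 * i)

lemma Pg_zero (a : ℤ) : Pg a 0 = 1 := rfl

lemma Pg_succ (a : ℤ) (m : ℕ) : Pg a (m + 1) = Pg a m * (a + 4 * m) :=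
  prod_range_succ _ _

def F (n j : ℕ) : ℤ :=
  (-1) ^ j * 4 ^ (n + j) * Pg 1 (n - j) ^ 2 * (n.choose j) * (n.descFactorial (2 * j) : ℤ)

def G (n : ℕ) : ℕ → ℤ
  | 0 => 0
  | t + 1 =>
      (-1) ^ t * 4 ^ (n + t + 2) * (3 * (n : ℤ) + 1 - 2 * t) * (n.choose t) *
        (n.descFactorial (2 * t + 1) : ℤ) * Pg 1 (n - t) ^ 2

theorem cert (n j : ℕ) :
    F (n + 1) j - 4 * (2 * (n : ℤ) + 1) ^ 2 * F n j = G n (j + 1) - G n j := by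
  match j with
  | 0 =>
    simp only [F, G, Nat.sub_zero, Nat.choose_zero_right, Nat.mul_zero, Nat.descFactorial_zero,
      Nat.cast_one, mul_one, pow_zero, one_mul, sub_zero]
    rw [show 2 * 0 + 1 = 1 from rfl, Nat.descFactorial_one, Pg_succ]
    push_cast
    ring
  | t + 1 =>
    rcases lt_trichotomy n (2 * t + 1) with hlt | heq | hgt
    · have h1 : (n + 1).descFactorial (2 * (t + 1)) = 0 := Nat.descFactorial_of_lt (by omega)
      have h2 : n.descFactorial (2 * (t + 1)) = 0 := Nat.descFactorial_of_lt (by omega)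
      have h3 : n.descFactorial (2 * (t + 1) + 1) = 0 := Nat.descFactorial_of_lt (by omega)
      have h4 : n.descFactorial (2 * t + 1) = 0 := Nat.descFactorial_of_lt (by omega)
      simp only [F, G, h1, h2, h3, h4, Nat.cast_zero, mul_zero, zero_mul, sub_zero]
    · subst heq
      have h2 : (2 * t + 1).descFactorial (2 * (t + 1)) = 0 :=
        Nat.descFactorial_of_lt (by omega)
      have h3 : (2 * t + 1).descFactorial (2 * (t + 1) + 1) = 0 :=
        Nat.descFactorial_of_lt (by omega)
      have hd : (2 * t + 1 + 1).descFactorial (2 * (t + 1)) =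
          (2 * t + 1 + 1) * (2 * t + 1).descFactorial (2 * t + 1) := by
        rw [show 2 * (t + 1) = (2 * t + 1) + 1 from by ring]
        exact Nat.succ_descFactorial_succ (2 * t + 1) (2 * t + 1)
      have hc : (2 * t + 1 + 1).choose (t + 1) = 2 * ((2 * t + 1).choose t) := by
        rw [Nat.choose_succ_succ]
        simp only [Nat.succ_eq_add_one]
        have h5 : (2 * t + 1).choose (t + 1) = (2 * t + 1).choose t := by
          have := Nat.choose_symm (show t + 1 ≤ 2 * t + 1 by omega)
          rw [show 2 * t + 1 - (t + 1) = t from by omega] at this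
          omega
        omega
      simp only [F, G, h2, h3, hd, hc]
      rw [show 2 * t + 1 + 1 - (t + 1) = t + 1 from by omega,
        show 2 * t + 1 - t = t + 1 from by omega,
        show 2 * t + 1 - (t + 1) = t from by omega]
      push_cast
      ring
    · have ht1 : t + 1 ≤ n := by omega
      have hd1 : (n + 1).descFactorial (2 * (t + 1)) = (n + 1) * n.descFactorial (2 * t + 1) := by
        rw [show 2 * (t + 1) = (2 * t + 1) + 1 from by ring]
        exact Nat.succ_descFactorial_succ n (2 * t + 1)
      have hd2 : n.descFactorial (2 * (t + 1)) = (n - (2 * t + 1)) * n.descFactorial (2 * t + 1) := by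
        rw [show 2 * (t + 1) = (2 * t + 1) + 1 from by ring]
        exact Nat.descFactorial_succ n (2 * t + 1)
      have hd3 : n.descFactorial (2 * (t + 1) + 1) =
          (n - (2 * t + 2)) * ((n - (2 * t + 1)) * n.descFactorial (2 * t + 1)) := by
        rw [show 2 * (t + 1) + 1 = (2 * t + 2) + 1 from by ring, Nat.descFactorial_succ,
          show 2 * t + 2 = (2 * t + 1) + 1 from by ring, Nat.descFactorial_succ]
      have hpg : Pg 1 (n - t) = Pg 1 (n - (t + 1)) * (1 + 4 * ((n : ℤ) - (t + 1))) := by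
        rw [show n - t = (n - (t + 1)) + 1 from by omega, Pg_succ]
        have : ((n - (t + 1) : ℕ) : ℤ) = (n : ℤ) - (t + 1) := by
          push_cast [Nat.cast_sub ht1]; ring
        rw [this]
      have hc : (n + 1).choose (t + 1) = n.choose t + n.choose (t + 1) := Nat.choose_succ_succ n t
      have hAB : ((n.choose (t + 1) : ℤ)) * (t + 1) = (n.choose t : ℤ) * ((n : ℤ) - t) := by
        have h := Nat.choose_succ_right_eq n t
        have h' : ((n.choose (t + 1) * (t + 1) : ℕ) : ℤ) = ((n.choose t * (n - t) : ℕ) : ℤ) := by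
          exact_mod_cast congrArg (Nat.cast : ℕ → ℤ) h
        push_cast [Nat.cast_sub (show t ≤ n by omega)] at h'
        linarith
      simp only [F, G]
      rw [show n + 1 - (t + 1) = n - t from by omega, hd1, hd2, hd3, hc, hpg]
      push_cast [Nat.cast_sub (show 2 * t + 1 ≤ n by omega),
        Nat.cast_sub (show 2 * t + 2 ≤ n by omega)]
      linear_combination ((-1 : ℤ)) ^ (t + 1) * 4 ^ (n + t + 1) * (Pg 1 (n - (t + 1))) ^ 2 *
        (n.descFactorial (2 * t + 1) : ℤ) * 8 * (4 * ((n : ℤ) - (t + 1)) + 1) ^ 2 * hAB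



def SF (n : ℕ) : ℤ := ∑ j ∈ range (n + 1), F n j

lemma F_eq_zero {n j : ℕ} (h : n < j) : F n j = 0 := by
  simp [F, Nat.choose_eq_zero_of_lt h]

lemma tel (g : ℕ → ℤ) : ∀ N, ∑ j ∈ range N, (g (j + 1) - g j) = g N - g 0
  | 0 => by simp
  | N + 1 => by rw [sum_range_succ, tel g N]; ring

lemma descFactorial_cast {n k : ℕ} (h : k ≤ n) :
    ((n.descFactorial k : ℕ) : ℚ) = (n)! / ((n - k))! := by
  rw [eq_div_iff (by exact_mod_cast (n - k).factorial_ne_zero)]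
  exact_mod_cast congrArg (Nat.cast : ℕ → ℚ) (by rw [mul_comm]; exact Nat.factorial_mul_descFactorial h)

lemma SF_succ (n : ℕ) : SF (n + 1) = 4 * (2 * (n : ℤ) + 1) ^ 2 * SF n := by
  have h1 : SF (n + 1) =
      ∑ j ∈ range (n + 2), (4 * (2 * (n : ℤ) + 1) ^ 2 * F n j + (G n (j + 1) - G n j)) := by
    unfold SF
    refine sum_congr rfl fun j _ => ?_
    have := cert n j
    linarith
  rw [h1, sum_add_distrib, ← mul_sum, tel, sum_range_succ, F_eq_zero (show n < n + 1 by omega)]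
  have hG0 : G n 0 = 0 := rfl
  have hGtop : G n (n + 2) = 0 := by
    show ((-1 : ℤ)) ^ (n + 1) * 4 ^ (n + (n + 1) + 2) * (3 * (n : ℤ) + 1 - 2 * (n + 1)) *
      (n.choose (n + 1)) * (n.descFactorial (2 * (n + 1) + 1) : ℤ) * Pg 1 (n - (n + 1)) ^ 2 = 0
    rw [Nat.choose_eq_zero_of_lt (by omega)]
    push_cast; ring
  rw [hG0, hGtop]
  unfold SF
  ring

lemma SF_eq : ∀ n : ℕ, SF n = ((2 * n).descFactorial n : ℤ) ^ 2
  | 0 => by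
    show F 0 0 = _
    simp [F, Pg_zero]
  | n + 1 => by
    rw [SF_succ, SF_eq n]
    have hN : (2 * (n + 1)).descFactorial (n + 1) = 2 * (2 * n + 1) * ((2 * n).descFactorial n) := by
      have h1 : ((2 * (n + 1)).descFactorial (n + 1) : ℚ) = (2 * (n + 1))! / (n + 1)! := by
        rw [descFactorial_cast (by omega), show 2 * (n + 1) - (n + 1) = n + 1 from by omega]
      have h2 : (((2 * n).descFactorial n : ℕ) : ℚ) = (2 * n)! / (n)! := by
        rw [descFactorial_cast (by omega), show 2 * n - n = n from by omega]
      have key : ((2 * (n + 1)).descFactorial (n + 1) : ℚ) =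
          ((2 * (2 * n + 1) * ((2 * n).descFactorial n) : ℕ) : ℚ) := by
        rw [h1]
        push_cast [h2]
        rw [show 2 * (n + 1) = (2 * n + 1) + 1 from by ring, Nat.factorial_succ,
          Nat.factorial_succ, Nat.factorial_succ]
        push_cast
        field_simp
        ring
      exact_mod_cast key
    rw [hN]
    push_cast
    ring

lemma vdm (a b : ℤ) : ∀ n : ℕ,
    ∑ m ∈ range (n + 1), (n.choose m : ℤ) * Pg a m * Pg b (n - m) = Pg (a + b) n
  | 0 => by simp [Pg_zero]
  | n + 1 => by
    rw [Finset.sum_range_succ']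
    have e0 : ((n + 1).choose 0 : ℤ) * Pg a 0 * Pg b (n + 1 - 0) = Pg b (n + 1) := by
      simp [Pg_zero]
    rw [e0]
    have e1 : ∀ j ∈ range (n + 1),
        ((n + 1).choose (j + 1) : ℤ) * Pg a (j + 1) * Pg b (n + 1 - (j + 1)) =
          (n.choose j : ℤ) * Pg a (j + 1) * Pg b (n - j) +
            (n.choose (j + 1) : ℤ) * Pg a (j + 1) * Pg b (n - j) := by
      intro j _
      rw [Nat.choose_succ_succ, show n + 1 - (j + 1) = n - j from by omega]
      push_cast
      ring
    rw [sum_congr rfl e1, sum_add_distrib]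
    have e2 : ∑ j ∈ range (n + 1), (n.choose (j + 1) : ℤ) * Pg a (j + 1) * Pg b (n - j) =
        (∑ j ∈ range (n + 1), (n.choose j : ℤ) * Pg a j * Pg b (n + 1 - j)) - Pg b (n + 1) := by
      have h3 := Finset.sum_range_succ' (fun j => (n.choose j : ℤ) * Pg a j * Pg b (n + 1 - j)) (n + 1)
      have h4 : ∑ j ∈ range (n + 1 + 1), (n.choose j : ℤ) * Pg a j * Pg b (n + 1 - j) =
          ∑ j ∈ range (n + 1), (n.choose j : ℤ) * Pg a j * Pg b (n + 1 - j) := by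
        rw [sum_range_succ, Nat.choose_eq_zero_of_lt (by omega)]
        simp
      simp only [Nat.choose_zero_right, Nat.cast_one, one_mul, Pg_zero, Nat.sub_zero, mul_one] at h3
      rw [h4] at h3
      have h5 : ∀ j ∈ range (n + 1),
          (n.choose (j + 1) : ℤ) * Pg a (j + 1) * Pg b (n + 1 - (j + 1)) =
            (n.choose (j + 1) : ℤ) * Pg a (j + 1) * Pg b (n - j) := by
        intro j _
        rw [show n + 1 - (j + 1) = n - j from by omega]
      rw [sum_congr rfl h5] at h3
      linarith
    rw [e2]
    have e3 : ∀ j ∈ range (n + 1),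
        (n.choose j : ℤ) * Pg a (j + 1) * Pg b (n - j) +
          (n.choose j : ℤ) * Pg a j * Pg b (n + 1 - j) =
        (a + b + 4 * n) * ((n.choose j : ℤ) * Pg a j * Pg b (n - j)) := by
      intro j hj
      have hj' : j ≤ n := by simpa using Nat.lt_succ_iff.mp (mem_range.mp hj)
      rw [Pg_succ, show n + 1 - j = (n - j) + 1 from by omega, Pg_succ]
      have : ((n - j : ℕ) : ℤ) = (n : ℤ) - j := by
        push_cast [Nat.cast_sub hj']; ring
      rw [this]
      ring
    have e4 : (∑ j ∈ range (n + 1), (n.choose j : ℤ) * Pg a (j + 1) * Pg b (n - j)) +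
        (∑ j ∈ range (n + 1), (n.choose j : ℤ) * Pg a j * Pg b (n + 1 - j)) =
        (a + b + 4 * n) * ∑ j ∈ range (n + 1), (n.choose j : ℤ) * Pg a j * Pg b (n - j) := by
      rw [← sum_add_distrib, mul_sum]
      exact sum_congr rfl e3
    rw [show (∑ j ∈ range (n + 1), (n.choose j : ℤ) * Pg a (j + 1) * Pg b (n - j)) +
        ((∑ j ∈ range (n + 1), (n.choose j : ℤ) * Pg a j * Pg b (n + 1 - j)) - Pg b (n + 1)) +
        Pg b (n + 1) =
        (∑ j ∈ range (n + 1), (n.choose j : ℤ) * Pg a (j + 1) * Pg b (n - j)) +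
        (∑ j ∈ range (n + 1), (n.choose j : ℤ) * Pg a j * Pg b (n + 1 - j)) from by ring,
      e4, vdm a b n, Pg_succ]
    push_cast
    ring

lemma fact_Pg2 : ∀ n : ℕ, ((n)! : ℤ) * Pg 2 n = ((2 * n)! : ℤ)
  | 0 => by simp [Pg_zero]
  | n + 1 => by
    have ih := fact_Pg2 n
    rw [Pg_succ, show 2 * (n + 1) = (2 * n + 1) + 1 from by ring, Nat.factorial_succ,
      Nat.factorial_succ, Nat.factorial_succ]
    push_cast
    linear_combination ((n : ℤ) + 1) * (2 + 4 * n) * ih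

lemma tri (N : ℕ) (t : ℕ → ℕ → ℤ) :
    ∑ j ∈ range N, ∑ i ∈ range (N - j), t j i = ∑ i ∈ range N, ∑ j ∈ range (N - i), t j i := by
  have h : ∀ (u : ℕ → ℕ → ℤ), ∑ j ∈ range N, ∑ i ∈ range (N - j), u j i
      = ∑ j ∈ range N, ∑ i ∈ range N, if j + i < N then u j i else 0 := by
    intro u
    refine sum_congr rfl fun j _ => ?_
    rw [← sum_filter]
    congr 1
    ext i
    simp only [mem_filter, mem_range]
    omega
  rw [h, h (fun i j => t j i)]
  rw [Finset.sum_comm]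
  refine sum_congr rfl fun i _ => sum_congr rfl fun j _ => ?_
  congr 1
  · simp [Nat.add_comm]


/-- step E1+E2+E3 : clear denominators, expand SF, reindex the double sum. -/
lemma E123 (p : ℕ) (hp1 : 1 ≤ p) :
    (((p-1)! : ℕ) : ℤ)^2 * ∑ k ∈ range p, ((2*k).choose k : ℤ)^2 * 32^(p-1-k)
    = ∑ m ∈ range p, ∑ j ∈ range (p - m),
        ((p-1).descFactorial (p-1-(j+m)) : ℤ)^2 * F (j+m) j * 32^(p-1-(j+m)) := by
  have step1 : ∀ k ∈ range p,
      (((p-1)! : ℕ) : ℤ)^2 * (((2*k).choose k : ℤ)^2 * 32^(p-1-k))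
      = ∑ j ∈ range p, ((p-1).descFactorial (p-1-k) : ℤ)^2 * F k j * 32^(p-1-k) := by
    intro k hk
    have hkp : k ≤ p - 1 := by have := mem_range.mp hk; omega
    -- ℕ identity:  (p-1)! * C(2k,k) = d(p-1, p-1-k) * d(2k, k)
    have hnat : (p-1)! * ((2*k).choose k) = (p-1).descFactorial (p-1-k) * (2*k).descFactorial k := by
      have e1 : (((p-1).descFactorial (p-1-k) : ℕ) : ℚ) = ((p-1))! / (k)! := by
        rw [descFactorial_cast (by omega), show p-1-(p-1-k) = k from by omega]
      have e2 : (((2*k).descFactorial k : ℕ) : ℚ) = ((2*k))! / (k)! := by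
        rw [descFactorial_cast (by omega), show 2*k-k = k from by omega]
      have e3 : (((2*k).choose k : ℕ) : ℚ) = ((2*k))! / ((k)! * (k)!) := by
        rw [Nat.cast_choose ℚ (show k ≤ 2*k by omega), show 2*k-k = k from by omega]
      have key : (((p-1)! * ((2*k).choose k) : ℕ) : ℚ)
          = (((p-1).descFactorial (p-1-k) * (2*k).descFactorial k : ℕ) : ℚ) := by
        push_cast [e1, e2, e3]
        field_simp
      exact_mod_cast key
    have hz : (((p-1)! : ℕ) : ℤ) * ((2*k).choose k : ℤ)
        = ((p-1).descFactorial (p-1-k) : ℤ) * ((2*k).descFactorial k : ℤ) := by exact_mod_cast hnat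
    have hSF : ∑ j ∈ range p, ((p-1).descFactorial (p-1-k) : ℤ)^2 * F k j * 32^(p-1-k)
        = ((p-1).descFactorial (p-1-k) : ℤ)^2 * 32^(p-1-k) * SF k := by
      rw [SF]
      have hext : ∑ j ∈ range (k+1), F k j = ∑ j ∈ range p, F k j := by
        apply sum_subset (by simp [range_subset]; omega)
        intro j _ hj
        exact F_eq_zero (by simp at hj ⊢; omega)
      rw [hext, mul_sum]
      refine sum_congr rfl fun j _ => by ring
    rw [hSF, SF_eq]
    have : (((p-1)! : ℕ) : ℤ)^2 * ((2*k).choose k : ℤ)^2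
        = ((p-1).descFactorial (p-1-k) : ℤ)^2 * ((2*k).descFactorial k : ℤ)^2 := by
      linear_combination ((((p-1)! : ℕ) : ℤ) * ((2*k).choose k : ℤ)
        + ((p-1).descFactorial (p-1-k) : ℤ) * ((2*k).descFactorial k : ℤ)) * hz
    linear_combination (32:ℤ)^(p-1-k) * this
  rw [mul_sum, sum_congr rfl step1]
  -- now : Σ_k Σ_j  d(p-1,p-1-k)² F k j 32^(p-1-k)  with j over range p
  rw [Finset.sum_comm]
  -- Σ_j Σ_k ; restrict k to Ico j p then shift
  have step2 : ∀ j ∈ range p,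
      ∑ k ∈ range p, ((p-1).descFactorial (p-1-k) : ℤ)^2 * F k j * 32^(p-1-k)
      = ∑ i ∈ range (p - j), ((p-1).descFactorial (p-1-(j+i)) : ℤ)^2 * F (j+i) j * 32^(p-1-(j+i)) := by
    intro j _
    have hres : ∑ k ∈ Ico j p, ((p-1).descFactorial (p-1-k) : ℤ)^2 * F k j * 32^(p-1-k)
        = ∑ k ∈ range p, ((p-1).descFactorial (p-1-k) : ℤ)^2 * F k j * 32^(p-1-k) := by
      apply sum_subset
      · rw [range_eq_Ico]; exact Ico_subset_Ico (by omega) le_rfl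
      · intro k hk hk2
        simp only [mem_range] at hk
        simp only [mem_Ico] at hk2
        rw [F_eq_zero (show k < j by omega)]
        ring
    rw [← hres, sum_Ico_eq_sum_range]
  rw [sum_congr rfl step2]
  exact tri p _



/-- the (m,j) term identity after reindexing -/
lemma ID1 (p m j : ℕ) (hm : m < p) (hj : j < p - m) :
    ((p-1).descFactorial (p-1-(j+m)) : ℤ)^2 * F (j+m) j * 32^(p-1-(j+m))
    = Pg 1 m ^ 2 * ((p-1).descFactorial (p-1-m) : ℤ)^2 * 4^m *
        ((m.choose j : ℤ) * (-16)^j * 32^(p-1-m-j)) := by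
  rcases le_or_gt j m with hjm | hjm
  · have hmj : j + m ≤ p - 1 := by omega
    have hkey : ((p-1).descFactorial (p-1-(j+m)))^2 * ((j+m).choose j) * ((j+m).descFactorial (2*j))
        = ((p-1).descFactorial (p-1-m))^2 * (m.choose j) := by
      have e1 : (((p-1).descFactorial (p-1-(j+m)) : ℕ) : ℚ) = ((p-1))! / ((j+m))! := by
        rw [descFactorial_cast (by omega), show p-1-(p-1-(j+m)) = j+m from by omega]
      have e2 : (((p-1).descFactorial (p-1-m) : ℕ) : ℚ) = ((p-1))! / ((m))! := by
        rw [descFactorial_cast (by omega), show p-1-(p-1-m) = m from by omega]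
      have e3 : (((j+m).choose j : ℕ) : ℚ) = ((j+m))! / ((j)! * (m)!) := by
        rw [Nat.cast_choose ℚ (show j ≤ j+m by omega), show j+m-j = m from by omega]
      have e4 : (((j+m).descFactorial (2*j) : ℕ) : ℚ) = ((j+m))! / ((m-j))! := by
        rw [descFactorial_cast (by omega), show j+m-2*j = m-j from by omega]
      have e5 : ((m.choose j : ℕ) : ℚ) = (m)! / ((j)! * ((m-j))!) :=
        Nat.cast_choose ℚ hjm
      have key : ((((p-1).descFactorial (p-1-(j+m)))^2 * ((j+m).choose j) * ((j+m).descFactorial (2*j)) : ℕ) : ℚ)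
          = ((((p-1).descFactorial (p-1-m))^2 * (m.choose j) : ℕ) : ℚ) := by
        push_cast [e1, e2, e3, e4, e5]
        rw [div_pow, div_pow]
        field_simp
      exact_mod_cast key
    have hkeyZ : ((p-1).descFactorial (p-1-(j+m)) : ℤ)^2 * ((j+m).choose j : ℤ) * ((j+m).descFactorial (2*j) : ℤ)
        = ((p-1).descFactorial (p-1-m) : ℤ)^2 * (m.choose j : ℤ) := by exact_mod_cast hkey
    rw [show p-1-(j+m) = p-1-m-j from by omega] at hkeyZ
    rw [F, show j+m-j = m from by omega, show p-1-(j+m) = p-1-m-j from by omega]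
    have h16 : ((-16 : ℤ))^j = (-1)^j * (4^j * 4^j) := by
      rw [show (-16 : ℤ) = (-1) * (4 * 4) from by norm_num, mul_pow, mul_pow]
    rw [h16]
    linear_combination ((-1:ℤ))^j * 4^((j+m)+j) * Pg 1 m ^ 2 * 32^(p-1-m-j) * hkeyZ
  · rw [F, Nat.descFactorial_of_lt (show j+m < 2*j by omega),
      Nat.choose_eq_zero_of_lt hjm]
    push_cast
    ring

lemma inner_closed (p f m : ℕ) (hpf : p = 4*f+1) (hm : m ≤ 2*f) :
    ∑ j ∈ range (p - m), (m.choose j : ℤ) * (-16)^j * 32^(p-1-m-j)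
    = 16^m * 32^(p-1-2*m) := by
  have hext : ∑ j ∈ range (m+1), (m.choose j : ℤ) * (-16)^j * 32^(p-1-m-j)
      = ∑ j ∈ range (p - m), (m.choose j : ℤ) * (-16)^j * 32^(p-1-m-j) := by
    apply sum_subset (by simp [range_subset]; omega)
    intro j _ hj
    simp only [mem_range] at hj
    rw [Nat.choose_eq_zero_of_lt (by omega)]
    push_cast
    ring
  rw [← hext]
  have hterm : ∀ j ∈ range (m+1), (m.choose j : ℤ) * (-16)^j * 32^(p-1-m-j)
      = 32^(p-1-2*m) * ((-16)^j * 32^(m-j) * (m.choose j : ℤ)) := by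
    intro j hj
    simp only [mem_range] at hj
    rw [show p-1-m-j = (p-1-2*m) + (m-j) from by omega, pow_add]
    ring
  rw [sum_congr rfl hterm, ← mul_sum, ← add_pow]
  norm_num
  ring

lemma p_dvd_Pg (p f m : ℕ) (hpf : p = 4*f+1) (hm : f < m) : (p:ℤ) ∣ Pg 1 m := by
  have h : (p:ℤ) = 1 + 4*(f:ℕ) := by push_cast [hpf]; ring
  rw [h, Pg]
  exact dvd_prod_of_mem _ (mem_range.mpr hm)

lemma dsplit (p f m : ℕ) (hm : m ≤ f) (hf : f ≤ p-1) :
    (p-1).descFactorial (p-1-m) = (p-1).descFactorial (p-1-f) * f.descFactorial (f-m) := by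
  have e1 : (((p-1).descFactorial (p-1-m) : ℕ) : ℚ) = ((p-1))! / ((m))! := by
    rw [descFactorial_cast (by omega), show p-1-(p-1-m) = m from by omega]
  have e2 : (((p-1).descFactorial (p-1-f) : ℕ) : ℚ) = ((p-1))! / ((f))! := by
    rw [descFactorial_cast (by omega), show p-1-(p-1-f) = f from by omega]
  have e3 : ((f.descFactorial (f-m) : ℕ) : ℚ) = ((f))! / ((m))! := by
    rw [descFactorial_cast (by omega), show f-(f-m) = m from by omega]
  have key : (((p-1).descFactorial (p-1-m) : ℕ) : ℚ)
      = (((p-1).descFactorial (p-1-f) * f.descFactorial (f-m) : ℕ) : ℚ) := by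
    push_cast [e1, e2, e3]
    field_simp
  exact_mod_cast key

def Bf (f m : ℕ) : ℤ := (f.descFactorial (f-m) : ℤ) * Pg 1 m * 4^(f-m)

/-- E5 per-term -/
lemma E5term (p f m : ℕ) (hpf : p = 4*f+1) (hm : m ≤ f) :
    Pg 1 m ^ 2 * ((p-1).descFactorial (p-1-m) : ℤ)^2 * 4^m * (16^m * 32^(p-1-2*m))
    = ((p-1).descFactorial (p-1-f) : ℤ)^2 * 2^(16*f) * (Bf f m)^2 := by
  obtain ⟨u, rfl⟩ : ∃ u, f = m + u := ⟨f - m, by omega⟩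
  rw [dsplit p (m+u) m (by omega) (by omega), Bf,
    show m + u - m = u from by omega, show p-1-2*m = 2*m+4*u from by omega]
  push_cast
  rw [show (4:ℤ) = 2^2 from by norm_num, show (16:ℤ) = 2^4 from by norm_num,
    show (32:ℤ) = 2^5 from by norm_num, ← pow_mul, ← pow_mul, ← pow_mul, ← pow_mul]
  ring



lemma Pmod (p f : ℕ) (hp : p.Prime) (hpf : p = 4*f+1) :
    ∀ m, m ≤ f → (p:ℤ) ∣ ((f-m)! : ℤ) * Pg 1 m - (-4)^m * ((f)! : ℤ)
  | 0, _ => by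
    rw [Nat.sub_zero, Pg_zero]
    simp
  | m+1, h => by
    have ih := Pmod p f hp hpf m (by omega)
    have key : ((f:ℤ) - m) * (((f-(m+1))! : ℤ) * Pg 1 (m+1) - (-4)^(m+1) * ((f)! : ℤ))
        = (1 + 4*m) * (((f-m)! : ℤ) * Pg 1 m - (-4)^m * ((f)! : ℤ))
          + ((-4)^m * ((f)! : ℤ)) * p := by
      rw [Pg_succ]
      have e1 : ((f - m)! : ℤ) = ((f:ℤ) - m) * ((f - (m+1))! : ℤ) := by
        rw [show f - m = (f - (m+1)) + 1 from by omega, Nat.factorial_succ]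
        push_cast [Nat.cast_sub (show m+1 ≤ f from h)]
        ring
      rw [e1, show ((p:ℕ) : ℤ) = 4*(f:ℤ)+1 from by exact_mod_cast congrArg (Nat.cast : ℕ → ℤ) hpf]
      ring
    have hdvd : (p:ℤ) ∣ ((f:ℤ)-m) * (((f-(m+1))! : ℤ) * Pg 1 (m+1) - (-4)^(m+1) * ((f)! : ℤ)) := by
      rw [key]
      exact dvd_add (Dvd.dvd.mul_left ih _) (Dvd.dvd.mul_left (dvd_refl _) _)
    have hprime : Prime ((p:ℕ) : ℤ) := Nat.prime_iff_prime_int.mp hp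
    rcases (hprime.dvd_mul.mp hdvd) with h1 | h1
    · exfalso
      have h2 : (0:ℤ) < (f:ℤ) - m := by
        have : (m:ℤ) < f := by exact_mod_cast (show m < f by omega)
        linarith
      have h3 := Int.le_of_dvd h2 h1
      have h4 : ((f:ℤ) - m) < p := by
        have : (f:ℤ) < p := by exact_mod_cast (show f < p by omega)
        have : (0:ℤ) ≤ m := by positivity
        linarith
      linarith
    · exact h1

lemma Bdiff (p f : ℕ) (hp : p.Prime) (hpf : p = 4*f+1) (m : ℕ) (hm : m ≤ f) :
    (p:ℤ) ∣ Bf f m - (-1)^f * Bf f (f-m) := by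
  obtain ⟨u, rfl⟩ : ∃ u, f = m + u := ⟨f - m, by omega⟩
  obtain ⟨X, hX⟩ := Pmod p (m+u) hp hpf m (by omega)
  obtain ⟨Y, hY⟩ := Pmod p (m+u) hp hpf u (by omega)
  -- rewrite the subtraction indices
  have hidx1 : m + u - m = u := by omega
  have hidx2 : m + u - u = m := by omega
  -- factorial-descFactorial relations
  have d1 : ((m+u).descFactorial u : ℤ) * ((m)! : ℤ) = (((m+u))! : ℤ) := by
    have := Nat.factorial_mul_descFactorial (show u ≤ m + u by omega)
    rw [show m + u - u = m from by omega] at this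
    exact_mod_cast by rw [mul_comm]; exact this
  have d2 : ((m+u).descFactorial m : ℤ) * ((u)! : ℤ) = (((m+u))! : ℤ) := by
    have := Nat.factorial_mul_descFactorial (show m ≤ m + u by omega)
    rw [show m + u - m = u from by omega] at this
    exact_mod_cast by rw [mul_comm]; exact this
  -- X relation : (u)! * Pg 1 m = (-4)^m * (m+u)! + p * X
  have hX' : ((u)! : ℤ) * Pg 1 m = (-4)^m * (((m+u))! : ℤ) + (p:ℤ) * X := by
    rw [show m + u - m = u from by omega] at hX
    linarith [hX]
  have hY' : ((m)! : ℤ) * Pg 1 u = (-4)^u * (((m+u))! : ℤ) + (p:ℤ) * Y := by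
    rw [show m + u - u = m from by omega] at hY
    linarith [hY]
  -- key multiplied identity
  have key : ((m)! : ℤ) * ((u)! : ℤ) * (Bf (m+u) m - (-1)^(m+u) * Bf (m+u) (m+u-m))
      = (p:ℤ) * ((((m+u))! : ℤ) * 4^u * X - (-1)^(m+u) * (((m+u))! : ℤ) * 4^m * Y) := by
    rw [hidx1, Bf, Bf, hidx1, hidx2]
    have hn4m : ((-4:ℤ))^m = (-1)^m * 4^m := by
      rw [show (-4:ℤ) = -1 * 4 from by norm_num, mul_pow]
    have hn4u : ((-4:ℤ))^u = (-1)^u * 4^u := by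
      rw [show (-4:ℤ) = -1 * 4 from by norm_num, mul_pow]
    have hsq : ((-1:ℤ))^u * (-1)^u = 1 := by
      rw [← mul_pow]; norm_num
    -- expand using d1 d2 hX' hY'
    calc ((m)! : ℤ) * ((u)! : ℤ) * ((((m+u).descFactorial u : ℤ) * Pg 1 m * 4^u)
            - (-1)^(m+u) * (((m+u).descFactorial m : ℤ) * Pg 1 u * 4^m))
        = (((m+u).descFactorial u : ℤ) * ((m)! : ℤ)) * (((u)! : ℤ) * Pg 1 m) * 4^u
            - (-1)^(m+u) * ((((m+u).descFactorial m : ℤ) * ((u)! : ℤ)) * (((m)! : ℤ) * Pg 1 u) * 4^m) := by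
          ring
      _ = (((m+u))! : ℤ) * ((-4)^m * (((m+u))! : ℤ) + (p:ℤ) * X) * 4^u
            - (-1)^(m+u) * ((((m+u))! : ℤ) * ((-4)^u * (((m+u))! : ℤ) + (p:ℤ) * Y) * 4^m) := by
          rw [d1, d2, hX', hY']
      _ = (p:ℤ) * ((((m+u))! : ℤ) * 4^u * X - (-1)^(m+u) * (((m+u))! : ℤ) * 4^m * Y) := by
          rw [hn4m, hn4u]
          linear_combination (-1 : ℤ) * ((((m+u))! : ℤ))^2 * 4^m * 4^u * (-1)^m * hsq
  have hdvd : (p:ℤ) ∣ ((m)! : ℤ) * (((u)! : ℤ) * (Bf (m+u) m - (-1)^(m+u) * Bf (m+u) (m+u-m))) := by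
    rw [← mul_assoc, key]
    exact Dvd.dvd.mul_right (dvd_refl _) _
  have hprime : Prime ((p:ℕ) : ℤ) := Nat.prime_iff_prime_int.mp hp
  have hnd : ∀ k : ℕ, k ≤ m + u → ¬ ((p:ℤ) ∣ ((k)! : ℤ)) := by
    intro k hk hdd
    have : (p:ℕ) ∣ (k)! := by exact_mod_cast hdd
    have := (Nat.Prime.dvd_factorial hp).mp this
    omega
  rcases hprime.dvd_mul.mp hdvd with h1 | h1
  · exact absurd h1 (hnd m (by omega))
  rcases hprime.dvd_mul.mp h1 with h2 | h2
  · exact absurd h2 (hnd u (by omega))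
  · exact h2

lemma sumsq (f : ℕ) (B : ℕ → ℤ) :
    ∑ m ∈ range (f+1), (B m - (-1)^f * B (f-m))^2
    = 2*((∑ m ∈ range (f+1), B m^2) - (-1)^f * ∑ m ∈ range (f+1), B m * B (f-m)) := by
  have hrefl : ∑ m ∈ range (f+1), (B (f-m))^2 = ∑ m ∈ range (f+1), B m^2 := by
    have := Finset.sum_range_reflect (fun m => B m ^ 2) (f+1)
    simpa using this
  have expand : ∀ m ∈ range (f+1), (B m - (-1)^f * B (f-m))^2
      = B m^2 - 2*(-1)^f*(B m * B (f-m)) + (B (f-m))^2 := by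
    intro m _
    have hsq : ((-1:ℤ))^f * (-1)^f = 1 := by rw [← mul_pow]; norm_num
    linear_combination (B (f-m))^2 * hsq
  have h2 : ∑ m ∈ range (f+1), (B m^2 - 2*(-1)^f*(B m * B (f-m)) + (B (f-m))^2)
      = ((∑ m ∈ range (f+1), B m^2) - 2*(-1)^f* ∑ m ∈ range (f+1), (B m * B (f-m)))
        + ∑ m ∈ range (f+1), (B (f-m))^2 := by
    rw [sum_add_distrib, sum_sub_distrib, mul_sum]
  rw [sum_congr rfl expand, h2, hrefl]
  ring

lemma BB (f : ℕ) : ∑ m ∈ range (f+1), Bf f m * Bf f (f-m) = 4^f * (((2*f))! : ℤ) := by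
  have hterm : ∀ m ∈ range (f+1), Bf f m * Bf f (f-m)
      = (f.choose m : ℤ) * ((f)! : ℤ) * (Pg 1 m * Pg 1 (f-m)) * 4^f := by
    intro m hm
    have hm' : m ≤ f := by simpa using Nat.lt_succ_iff.mp (mem_range.mp hm)
    rw [Bf, Bf, show f - (f-m) = m from by omega]
    have hdd : (f.descFactorial (f-m) : ℤ) * (f.descFactorial m : ℤ) = (f.choose m : ℤ) * ((f)! : ℤ) := by
      have e1 : ((f.descFactorial (f-m) : ℕ) : ℚ) = ((f))! / ((m))! := by
        rw [descFactorial_cast (by omega), show f-(f-m) = m from by omega]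
      have e2 : ((f.descFactorial m : ℕ) : ℚ) = ((f))! / (((f-m)))! := by
        rw [descFactorial_cast (by omega)]
      have e3 : ((f.choose m : ℕ) : ℚ) = ((f))! / ((m)! * ((f-m))!) := Nat.cast_choose ℚ hm'
      have key : ((f.descFactorial (f-m) * f.descFactorial m : ℕ) : ℚ)
          = ((f.choose m * (f)! : ℕ) : ℚ) := by
        push_cast [e1, e2, e3]
        field_simp
      exact_mod_cast key
    have hpow : (4:ℤ)^(f-m) * 4^m = 4^f := by
      rw [← pow_add]
      congr 1
      omega
    calc (f.descFactorial (f-m) : ℤ) * Pg 1 m * 4^(f-m) * ((f.descFactorial m : ℤ) * Pg 1 (f-m) * 4^m)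
        = ((f.descFactorial (f-m) : ℤ) * (f.descFactorial m : ℤ)) * (Pg 1 m * Pg 1 (f-m)) * (4^(f-m) * 4^m) := by ring
      _ = (f.choose m : ℤ) * ((f)! : ℤ) * (Pg 1 m * Pg 1 (f-m)) * 4^f := by rw [hdd, hpow]
  rw [sum_congr rfl hterm]
  have : ∑ m ∈ range (f+1), (f.choose m : ℤ) * ((f)! : ℤ) * (Pg 1 m * Pg 1 (f-m)) * 4^f
      = (((f)! : ℤ) * 4^f) * ∑ m ∈ range (f+1), (f.choose m : ℤ) * Pg 1 m * Pg 1 (f-m) := by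
    rw [mul_sum]
    exact sum_congr rfl fun m _ => by ring
  rw [this, vdm 1 1 f, show (1:ℤ)+1 = 2 from by norm_num]
  have := fact_Pg2 f
  linear_combination 4^f * this

lemma E8int (p f : ℕ) (hpf : p = 4*f+1) :
    (-4:ℤ)^f * (((p-1).descFactorial (p-1-f) : ℤ)^2 * 2^(16*f) * ((-1)^f * (4^f * (((2*f))! : ℤ))))
    = (((p-1)! : ℕ) : ℤ)^2 * ((2*f).choose f : ℤ) * 32^(p-1) := by
  rw [show p - 1 = 4*f from by omega]
  have hd : (4*f).descFactorial (4*f-f) * (f)! = ((4*f))! := by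
    have := Nat.factorial_mul_descFactorial (show 4*f-f ≤ 4*f from by omega)
    rw [show 4*f-(4*f-f) = f from by omega] at this
    rw [mul_comm]
    exact this
  have hc : (2*f).choose f * ((f)! * (f)!) = ((2*f))! := by
    have := Nat.choose_mul_factorial_mul_factorial (show f ≤ 2*f from by omega)
    rw [show 2*f-f = f from by omega] at this
    rw [← this]
    ring
  have hdZ : ((4*f).descFactorial (4*f-f) : ℤ) * ((f)! : ℤ) = (((4*f))! : ℤ) := by exact_mod_cast hd
  have hcZ : ((2*f).choose f : ℤ) * (((f)! : ℤ) * ((f)! : ℤ)) = (((2*f))! : ℤ) := by exact_mod_cast hc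
  have hne : (((f)! : ℤ)) * ((f)! : ℤ) ≠ 0 := by positivity
  apply mul_left_cancel₀ hne
  rw [show (32:ℤ) = 2^5 from by norm_num, show ((-4):ℤ) = -1*2^2 from by norm_num,
    show (4:ℤ) = 2^2 from by norm_num, mul_pow, ← pow_mul, ← pow_mul]
  have hsq : ((-1:ℤ))^f * (-1)^f = 1 := by rw [← mul_pow]; norm_num
  linear_combination ((((2*f))! : ℤ) * 2^(5*(4*f)) * (((4*f).descFactorial (4*f-f) : ℤ) * ((f)! : ℤ) + (((4*f))! : ℤ))) * hdZ
    - ((((4*f))! : ℤ)^2 * 2^(5*(4*f))) * hcZ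
    + ((((2*f))! : ℤ) * 2^(5*(4*f)) * (((4*f).descFactorial (4*f-f) : ℤ) * ((f)! : ℤ))^2) * hsq



def Ssum (p : ℕ) : ℤ := ∑ k ∈ range p, ((2*k).choose k : ℤ)^2 * 32^(p-1-k)
def termZ (p m : ℕ) : ℤ := Pg 1 m ^ 2 * ((p-1).descFactorial (p-1-m) : ℤ)^2 * 4^m *
  ∑ j ∈ range (p - m), ((m.choose j : ℤ) * (-16)^j * 32^(p-1-m-j))
def closedZ (p m : ℕ) : ℤ := Pg 1 m ^ 2 * ((p-1).descFactorial (p-1-m) : ℤ)^2 * 4^m *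
  (16^m * 32^(p-1-2*m))
def SBf (f : ℕ) : ℤ := ∑ m ∈ range (f+1), (Bf f m)^2
def SBBf (f : ℕ) : ℤ := ∑ m ∈ range (f+1), Bf f m * Bf f (f-m)

theorem main (p : ℕ) (hp : p.Prime) (hp4 : p % 4 = 1) :
    ((-4 : ℤ)) ^ ((p - 1) / 4) *
        (∑ k ∈ range p, ((Nat.choose (2 * k) k : ℤ)) ^ 2 * 32 ^ (p - 1 - k)) ≡
      (Nat.choose (2 * ((p - 1) / 4)) ((p - 1) / 4) : ℤ) * 32 ^ (p - 1)
      [ZMOD (p : ℤ) ^ 2] := by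
  obtain ⟨f, hpf⟩ : ∃ f, p = 4 * f + 1 := ⟨p / 4, by omega⟩
  have hf1 : 1 ≤ f := by have := hp.two_le; omega
  rw [show (p - 1) / 4 = f from by omega]
  have hcast : ((p ^ 2 : ℕ) : ℤ) = (p : ℤ) ^ 2 := by push_cast; ring
  rw [← hcast, ← ZMod.intCast_eq_intCast_iff]
  push_cast
  have hM : IsUnit ((((p - 1)! : ℕ) : ZMod (p ^ 2))) := by
    rw [ZMod.isUnit_iff_coprime]
    have hnd : ¬ p ∣ (p - 1)! := by
      intro hdd
      have := (Nat.Prime.dvd_factorial hp).mp hdd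
      omega
    exact (Nat.coprime_comm.mp ((Nat.Prime.coprime_iff_not_dvd hp).mpr hnd)).pow_right 2
  refine (IsUnit.mul_right_inj (hM.pow 2)).mp ?_
  have cast_zero : ∀ x : ℤ, (p:ℤ)^2 ∣ x → ((x : ZMod (p^2)) = 0) := by
    intro x hx
    rw [ZMod.intCast_zmod_eq_zero_iff_dvd, hcast]
    exact hx
  -- ℤ-level reduction to termZ
  have hT4 : (((p-1)! : ℕ) : ℤ)^2 * Ssum p = ∑ m ∈ range p, termZ p m := by
    rw [Ssum, E123 p (by omega)]
    refine sum_congr rfl fun m hm => ?_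
    rw [termZ, mul_sum]
    refine sum_congr rfl fun j hj => ?_
    exact ID1 p m j (mem_range.mp hm) (mem_range.mp hj)
  -- step A
  have stepA : (∑ m ∈ range p, ((termZ p m : ℤ) : ZMod (p^2)))
      = ((((p-1).descFactorial (p-1-f) : ℤ)^2 * 2^(16*f) * SBf f : ℤ) : ZMod (p^2)) := by
    rw [range_eq_Ico,
      ← Finset.sum_Ico_consecutive _ (show 0 ≤ 2*f+1 by omega) (show 2*f+1 ≤ p by omega)]
    have hzero1 : ∑ m ∈ Ico (2*f+1) p, ((termZ p m : ℤ) : ZMod (p^2)) = 0 := by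
      refine sum_eq_zero fun m hm => ?_
      have hmf : f < m := by have := (mem_Ico.mp hm).1; omega
      apply cast_zero
      rw [termZ]
      exact Dvd.dvd.mul_right (Dvd.dvd.mul_right (Dvd.dvd.mul_right
        (pow_dvd_pow_of_dvd (p_dvd_Pg p f m hpf hmf) 2) _) _) _
    rw [hzero1, add_zero]
    have hclosed : ∀ m ∈ Ico 0 (2*f+1),
        ((termZ p m : ℤ) : ZMod (p^2)) = ((closedZ p m : ℤ) : ZMod (p^2)) := by
      intro m hm
      rw [termZ, closedZ, inner_closed p f m hpf (by have := (mem_Ico.mp hm).2; omega)]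
    rw [sum_congr rfl hclosed,
      ← Finset.sum_Ico_consecutive _ (show 0 ≤ f+1 by omega) (show f+1 ≤ 2*f+1 by omega)]
    have hzero2 : ∑ m ∈ Ico (f+1) (2*f+1), ((closedZ p m : ℤ) : ZMod (p^2)) = 0 := by
      refine sum_eq_zero fun m hm => ?_
      have hmf : f < m := by have := (mem_Ico.mp hm).1; omega
      apply cast_zero
      rw [closedZ]
      exact Dvd.dvd.mul_right (Dvd.dvd.mul_right (Dvd.dvd.mul_right
        (pow_dvd_pow_of_dvd (p_dvd_Pg p f m hpf hmf) 2) _) _) _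
    rw [hzero2, add_zero]
    have hE5 : ∀ m ∈ Ico 0 (f+1),
        ((closedZ p m : ℤ) : ZMod (p^2))
        = (((((p-1).descFactorial (p-1-f) : ℤ)^2 * 2^(16*f) * (Bf f m)^2 : ℤ)) : ZMod (p^2)) := by
      intro m hm
      rw [closedZ, E5term p f m hpf (by have := (mem_Ico.mp hm).2; omega)]
    rw [sum_congr rfl hE5]
    have hfold : (((p-1).descFactorial (p-1-f) : ℤ)^2 * 2^(16*f) * SBf f : ℤ)
        = ∑ m ∈ Ico 0 (f+1), (((p-1).descFactorial (p-1-f) : ℤ)^2 * 2^(16*f) * (Bf f m)^2) := by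
      rw [SBf, mul_sum, range_eq_Ico]
    rw [hfold, Int.cast_sum]
  -- step B
  have stepB : ((SBf f : ℤ) : ZMod (p^2)) = (((-1:ℤ)^f * SBBf f : ℤ) : ZMod (p^2)) := by
    have hdvd : (p:ℤ)^2 ∣ (SBf f - (-1:ℤ)^f * SBBf f) := by
      have hsum : (p:ℤ)^2 ∣ ∑ m ∈ range (f+1), (Bf f m - (-1)^f * Bf f (f-m))^2 := by
        refine dvd_sum fun m hm => ?_
        exact pow_dvd_pow_of_dvd (Bdiff p f hp hpf m (by have := mem_range.mp hm; omega)) 2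
      rw [sumsq] at hsum
      have hcop : IsCoprime ((p:ℤ)^2) 2 := by
        apply IsCoprime.pow_left
        rw [Int.isCoprime_iff_gcd_eq_one]
        have h2 : ¬ (2 ∣ p) := by omega
        have h3 : Nat.Coprime p 2 :=
          Nat.coprime_comm.mp ((Nat.prime_two.coprime_iff_not_dvd).mpr h2)
        simpa [Int.gcd] using h3
      rw [SBf, SBBf]
      exact hcop.dvd_of_dvd_mul_left hsum
    have hz := cast_zero _ hdvd
    rw [Int.cast_sub, sub_eq_zero] at hz
    exact hz
  -- final calc
  calc (((p - 1)! : ℕ) : ZMod (p^2))^2 * ((-4)^f *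
          ∑ k ∈ range p, (((2*k).choose k : ℕ) : ZMod (p^2))^2 * 32^(p-1-k))
      = (-4 : ZMod (p^2))^f * (((((p-1)! : ℕ) : ℤ)^2 * Ssum p : ℤ) : ZMod (p^2)) := by
        rw [Ssum]
        push_cast
        ring
    _ = (-4 : ZMod (p^2))^f * ∑ m ∈ range p, ((termZ p m : ℤ) : ZMod (p^2)) := by
        rw [hT4, Int.cast_sum]
    _ = (-4 : ZMod (p^2))^f *
          ((((p-1).descFactorial (p-1-f) : ℤ)^2 * 2^(16*f) * SBf f : ℤ) : ZMod (p^2)) := by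
        rw [stepA]
    _ = (-4 : ZMod (p^2))^f *
          ((((p-1).descFactorial (p-1-f) : ℤ)^2 * 2^(16*f) * ((-1:ℤ)^f * SBBf f) : ℤ) : ZMod (p^2)) := by
        push_cast [stepB]
        push_cast
        ring
    _ = (((-4:ℤ)^f * (((p-1).descFactorial (p-1-f) : ℤ)^2 * 2^(16*f) *
          ((-1)^f * (4^f * (((2*f))! : ℤ)))) : ℤ) : ZMod (p^2)) := by
        rw [show SBBf f = 4^f * (((2*f))! : ℤ) from by rw [SBBf]; exact BB f]
        push_cast
        ring
    _ = (((((p-1)! : ℕ) : ℤ)^2 * ((2*f).choose f : ℤ) * 32^(p-1) : ℤ) : ZMod (p^2)) := by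
        rw [E8int p f hpf]
    _ = (((p - 1)! : ℕ) : ZMod (p^2))^2 * ((((2*f).choose f : ℕ) : ZMod (p^2)) * 32^(p-1)) := by
        push_cast
        ring


end RV32

open Finset

theorem rv_32_central_binom (p : ℕ) (hp : p.Prime) (hp4 : p % 4 = 1) :
    ((-4 : ℤ)) ^ ((p - 1) / 4) *
        (∑ k ∈ range p, ((Nat.choose (2 * k) k : ℤ)) ^ 2 * 32 ^ (p - 1 - k)) ≡
      (Nat.choose (2 * ((p - 1) / 4)) ((p - 1) / 4) : ℤ) * 32 ^ (p - 1)
      [ZMOD (p : ℤ) ^ 2] :=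
  RV32.main p hp hp4
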